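/- Let $G$ be a Cameron--Walker graph with standard labeling such that $t_j \leq 1$ for all $1 \leq j \leq n$. Then $i(G) = \sum_{j=1}^n t_j + m$, i.e. the minimum size of an independent dominating set of $G$ equals the matching number of $G$. -/

import Mathlib

/-- Vertices of a Cameron–Walker graph with standard labeling: the `vᵢ`, the `wⱼ`,
the leaves `x^(i)_k` (`1 ≤ k ≤ sᵢ`), and the pendant-triangle vertices
`y^(j)_{ℓ,1}, y^(j)_{ℓ,2}` (`1 ≤ ℓ ≤ tⱼ`). -/
abbrev CWVert (m n : ℕ) (s : Fin m → ℕ) (t : Fin n → ℕ) : Type :=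
  Fin m ⊕ Fin n ⊕ (Σ i : Fin m, Fin (s i)) ⊕ (Σ j : Fin n, Fin (t j) × Fin 2)

def cwRel (m n : ℕ) (s : Fin m → ℕ) (t : Fin n → ℕ) (B : Fin m → Fin n → Prop) :
    CWVert m n s t → CWVert m n s t → Prop
  | Sum.inl i, Sum.inr (Sum.inl j) => B i j
  | Sum.inl i, Sum.inr (Sum.inr (Sum.inl ⟨i', _⟩)) => i = i'
  | Sum.inr (Sum.inl j), Sum.inr (Sum.inr (Sum.inr ⟨j', _, _⟩)) => j = j'
  | Sum.inr (Sum.inr (Sum.inr ⟨j, ℓ, _⟩)), Sum.inr (Sum.inr (Sum.inr ⟨j', ℓ', _⟩)) =>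
      j = j' ∧ (ℓ : ℕ) = (ℓ' : ℕ)
  | _, _ => False

/-- The Cameron–Walker graph determined by the data `m, n, s, t, B`: a bipartite part
on `{v₁,…,v_m} ∪ {w₁,…,w_n}` with edges given by `B`, `s i` leaf edges attached to `vᵢ`,
and `t j` pendant triangles attached to `wⱼ`. -/
def cwGraph (m n : ℕ) (s : Fin m → ℕ) (t : Fin n → ℕ) (B : Fin m → Fin n → Prop) :
    SimpleGraph (CWVert m n s t) :=
  SimpleGraph.fromRel (cwRel m n s t B)

/-- The bipartite part of the Cameron–Walker graph. -/
def bipGraph (m n : ℕ) (B : Fin m → Fin n → Prop) : SimpleGraph (Fin m ⊕ Fin n) :=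
  SimpleGraph.fromRel fun a b =>
    match a, b with
    | Sum.inl i, Sum.inr j => B i j
    | _, _ => False

/-- An independent dominating set: an independent set `A` with `A ∪ N_G(A) = V(G)`. -/
def IsIndepDomSet {V : Type} (G : SimpleGraph V) (A : Finset V) : Prop :=
  (∀ a ∈ A, ∀ b ∈ A, ¬ G.Adj a b) ∧ (∀ v, v ∈ A ∨ ∃ a ∈ A, G.Adj a v)

/-- `i(G)`: the minimum cardinality of an independent dominating set of `G`. -/
noncomputable def indepDomNumber {V : Type} (G : SimpleGraph V) : ℕ :=
  sInf {k | ∃ A : Finset V, IsIndepDomSet G A ∧ A.card = k}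

/-- The independence number: the maximum cardinality of an independent set of `G`. -/
noncomputable def indepNumber {V : Type} [Fintype V] (G : SimpleGraph V) : ℕ :=
  sSup {k | ∃ A : Finset V, (∀ a ∈ A, ∀ b ∈ A, ¬ G.Adj a b) ∧ A.card = k}

/-- The matching number: the maximum cardinality of a matching of `G`. -/
noncomputable def matchingNumber {V : Type} [Fintype V] (G : SimpleGraph V) : ℕ :=
  sSup {k | ∃ M : Finset (Sym2 V), (∀ e ∈ M, e ∈ G.edgeSet) ∧
    (∀ e ∈ M, ∀ e' ∈ M, e ≠ e' → ∀ v, v ∈ e → v ∉ e') ∧ M.card = k}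
section CWProof
open Finset
variable {m n : ℕ} {s : Fin m → ℕ} {t : Fin n → ℕ} {B : Fin m → Fin n → Prop}

abbrev Idx (m n : ℕ) (t : Fin n → ℕ) := Fin m ⊕ (Σ j : Fin n, Fin (t j))

abbrev vv (i : Fin m) : CWVert m n s t := Sum.inl i
abbrev ww (j : Fin n) : CWVert m n s t := Sum.inr (Sum.inl j)
abbrev xx (i : Fin m) (k : Fin (s i)) : CWVert m n s t := Sum.inr (Sum.inr (Sum.inl ⟨i, k⟩))
abbrev yy (j : Fin n) (ℓ : Fin (t j)) (b : Fin 2) : CWVert m n s t :=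
  Sum.inr (Sum.inr (Sum.inr ⟨j, ℓ, b⟩))

lemma card_Idx : Fintype.card (Idx m n t) = m + ∑ j, t j := by simp

lemma adj_xx {a : CWVert m n s t} {i k} (h : (cwGraph m n s t B).Adj a (xx i k)) : a = vv i := by
  rcases h with ⟨hne, h | h⟩
  · rcases a with i' | j' | ⟨i', k'⟩ | ⟨j', ℓ', b'⟩ <;> simp [cwRel] at h ⊢
    · subst h; rfl
  · simp [cwRel] at h

lemma adj_yy {a : CWVert m n s t} {j ℓ b} (h : (cwGraph m n s t B).Adj a (yy j ℓ b)) :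
    a = ww j ∨ ∃ ℓ' b', a = yy j ℓ' b' := by
  rcases h with ⟨hne, h | h⟩ <;>
    rcases a with i' | j' | ⟨i', k'⟩ | ⟨j', ℓ', b'⟩ <;> simp [cwRel] at h ⊢
  · exact h
  · obtain ⟨rfl, -⟩ := h; exact ⟨rfl, ℓ', by fin_cases b' <;> simp⟩
  · obtain ⟨rfl, -⟩ := h; exact ⟨rfl, ℓ', by fin_cases b' <;> simp⟩

lemma exists_B (hm : 1 ≤ m) (hconn : (bipGraph m n B).Connected) (j : Fin n) :
    ∃ i, B i j := by
  obtain ⟨wlk⟩ := hconn.preconnected (Sum.inr j) (Sum.inl ⟨0, hm⟩)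
  cases wlk with
  | cons h p =>
    rename_i v
    rcases h with ⟨hne, h | h⟩
    · rcases v with i | j' <;> simp at h
    · rcases v with i | j'
      · exact ⟨i, h⟩
      · simp at h

lemma fin_t_eq (ht : ∀ j, t j ≤ 1) (j : Fin n) (a b : Fin (t j)) : a = b := by
  have h1 := a.isLt; have h2 := b.isLt; have h3 := ht j
  exact Fin.ext (by omega)

/-- Domination targets. -/
def domP : Idx m n t → CWVert m n s t → Prop
  | Sum.inl i => fun a => a = vv i ∨ ∃ k, a = xx i k
  | Sum.inr ⟨j, _⟩ => fun a => a = ww j ∨ ∃ ℓ' b, a = yy j ℓ' b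

lemma dom_lower (ht : ∀ j, t j ≤ 1) (hs : ∀ i, 1 ≤ s i) {A : Finset (CWVert m n s t)}
    (hA : IsIndepDomSet (cwGraph m n s t B) A) : m + ∑ j, t j ≤ A.card := by
  classical
  have hex : ∀ c : Idx m n t, ∃ a ∈ A, domP c a := by
    rintro (i | ⟨j, ℓ⟩)
    · rcases hA.2 (xx i ⟨0, hs i⟩) with h | ⟨a, ha, hadj⟩
      · exact ⟨_, h, Or.inr ⟨_, rfl⟩⟩
      · exact ⟨a, ha, Or.inl (adj_xx hadj)⟩
    · rcases hA.2 (yy j ℓ 0) with h | ⟨a, ha, hadj⟩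
      · exact ⟨_, h, Or.inr ⟨ℓ, 0, rfl⟩⟩
      · rcases adj_yy hadj with h | ⟨ℓ', b', h⟩
        · exact ⟨a, ha, Or.inl h⟩
        · exact ⟨a, ha, Or.inr ⟨ℓ', b', h⟩⟩
  choose f hfA hfP using hex
  have hinj : Function.Injective f := by
    intro c c' hfe
    have p := hfP c; have p' := hfP c'
    rw [hfe] at p
    rcases c with i | ⟨j, ℓ⟩ <;> rcases c' with i' | ⟨j', ℓ'⟩ <;>
        simp only [domP] at p p'
    · rcases p with h | ⟨k, h⟩ <;> rcases p' with h' | ⟨k', h'⟩ <;>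
        have hh := h.symm.trans h' <;> simp_all
    · rcases p with h | ⟨k, h⟩ <;> rcases p' with h' | ⟨a', b', h'⟩ <;>
        have hh := h.symm.trans h' <;> simp_all
    · rcases p with h | ⟨a, b, h⟩ <;> rcases p' with h' | ⟨k', h'⟩ <;>
        have hh := h.symm.trans h' <;> simp_all
    · rcases p with h | ⟨a, b, h⟩ <;> rcases p' with h' | ⟨a', b', h'⟩ <;>
        have hh := h.symm.trans h' <;> simp at hh <;>
        first
          | (obtain rfl := hh; rw [fin_t_eq ht j ℓ ℓ'])
          | (obtain ⟨rfl, -⟩ := hh; rw [fin_t_eq ht j ℓ ℓ'])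
  calc m + ∑ j, t j = (Finset.univ : Finset (Idx m n t)).card := by
        rw [Finset.card_univ, card_Idx]
    _ ≤ A.card := Finset.card_le_card_of_injOn f (fun c _ => hfA c) hinj.injOn

lemma dom_witness (hm : 1 ≤ m) (hconn : (bipGraph m n B).Connected) :
    ∃ A : Finset (CWVert m n s t), IsIndepDomSet (cwGraph m n s t B) A ∧
      A.card = m + ∑ j, t j := by
  classical
  refine ⟨(Finset.univ.image fun i : Fin m => (vv i : CWVert m n s t)) ∪
      Finset.univ.image (fun p : Σ j : Fin n, Fin (t j) => yy p.1 p.2 0), ⟨?_, ?_⟩, ?_⟩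
  · intro a ha b hb hadj
    simp only [Finset.mem_union, Finset.mem_image, Finset.mem_univ, true_and] at ha hb
    rcases hadj with ⟨hne, h | h⟩ <;>
      rcases ha with ⟨i, rfl⟩ | ⟨⟨j, ℓ⟩, rfl⟩ <;>
      rcases hb with ⟨i', rfl⟩ | ⟨⟨j', ℓ'⟩, rfl⟩ <;>
      simp [cwRel] at h <;>
      [skip; skip] <;>
      · obtain ⟨rfl, hv⟩ := h
        exact hne (by rw [Fin.ext hv])
  · intro v
    rcases v with i | j | ⟨i, k⟩ | ⟨j, ℓ, b⟩
    · exact Or.inl (by simp)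
    · obtain ⟨i, hBij⟩ := exists_B hm hconn j
      exact Or.inr ⟨vv i, by simp, by simp, Or.inl hBij⟩
    · exact Or.inr ⟨vv i, by simp, by simp, Or.inl rfl⟩
    · obtain ⟨bv, hb⟩ := b
      interval_cases bv
      · exact Or.inl (by simp)
      · refine Or.inr ⟨yy j ℓ 0, by simp, by simp, Or.inl ⟨rfl, rfl⟩⟩
  · rw [Finset.card_union_of_disjoint, Finset.card_image_of_injective _ Sum.inl_injective,
      Finset.card_image_of_injective, Finset.card_univ, Finset.card_univ]
    · simp
    · intro p q h
      obtain ⟨j, ℓ⟩ := p; obtain ⟨j', ℓ'⟩ := q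
      simp only [yy, Sum.inr.injEq] at h
      simp at h ⊢
      obtain ⟨rfl, h2⟩ := h
      simp_all
    · simp [Finset.disjoint_left]

def medge (hs : ∀ i, 1 ≤ s i) : Idx m n t → Sym2 (CWVert m n s t)
  | Sum.inl i => s(vv i, xx i ⟨0, hs i⟩)
  | Sum.inr ⟨j, ℓ⟩ => s(yy j ℓ 0, yy j ℓ 1)

lemma matching_witness (hs : ∀ i, 1 ≤ s i) :
    ∃ M : Finset (Sym2 (CWVert m n s t)),
      (∀ e ∈ M, e ∈ (cwGraph m n s t B).edgeSet) ∧
      (∀ e ∈ M, ∀ e' ∈ M, e ≠ e' → ∀ v, v ∈ e → v ∉ e') ∧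
      M.card = m + ∑ j, t j := by
  classical
  refine ⟨Finset.univ.image (medge hs), ?_, ?_, ?_⟩
  · intro e he
    simp only [Finset.mem_image, Finset.mem_univ, true_and] at he
    obtain ⟨c, rfl⟩ := he
    rcases c with i | ⟨j, ℓ⟩
    · exact ⟨by simp, Or.inl rfl⟩
    · exact ⟨by simp, Or.inl ⟨rfl, rfl⟩⟩
  · intro e he e' he' hne v hv hv'
    simp only [Finset.mem_image, Finset.mem_univ, true_and] at he he'
    obtain ⟨c, rfl⟩ := he; obtain ⟨c', rfl⟩ := he'
    have hcc : c ≠ c' := fun h => hne (h ▸ rfl)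
    rcases c with i | ⟨j, ℓ⟩ <;> rcases c' with i' | ⟨j', ℓ'⟩ <;>
      simp only [medge, Sym2.mem_iff] at hv hv' <;>
      rcases hv with rfl | rfl <;> rcases hv' with h | h <;> simp_all <;>
      (obtain ⟨rfl, h2⟩ := h
       have h2' := eq_of_heq h2
       simp only [Prod.mk.injEq] at h2'
       first
         | exact absurd h2'.2 (by decide)
         | exact hne (by rw [h2'.1]))
  · rw [Finset.card_image_of_injective, Finset.card_univ, card_Idx]
    intro c c' h
    rcases c with i | ⟨j, ℓ⟩ <;> rcases c' with i' | ⟨j', ℓ'⟩ <;>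
      simp only [medge, Sym2.eq_iff] at h <;> simp_all <;>
      (rcases h with ⟨⟨rfl, h2⟩, -⟩ | ⟨⟨rfl, h2⟩, -⟩ <;>
         have h2' := eq_of_heq h2 <;> simp only [Prod.mk.injEq] at h2'
       · exact ⟨rfl, heq_of_eq h2'.1⟩
       · exact absurd h2'.2 (by decide))

def edgeP : Idx m n t → Sym2 (CWVert m n s t) → Prop
  | Sum.inl i => fun e => vv i ∈ e
  | Sum.inr ⟨j, ℓ⟩ => fun e =>
      e = s(ww j, yy j ℓ 0) ∨ e = s(ww j, yy j ℓ 1) ∨ e = s(yy j ℓ 0, yy j ℓ 1)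

lemma rel_edgeP (ht : ∀ j, t j ≤ 1) {a b : CWVert m n s t} (hne : a ≠ b)
    (h : cwRel m n s t B a b) : ∃ c : Idx m n t, edgeP c s(a, b) := by
  rcases a with i | j | ⟨i, k⟩ | ⟨j, ℓ, bb⟩ <;>
    rcases b with i' | j' | ⟨i', k'⟩ | ⟨j', ℓ', bb'⟩ <;> simp [cwRel] at h
  · exact ⟨Sum.inl i, by simp [edgeP]⟩
  · exact ⟨Sum.inl i, by simp [edgeP]⟩
  · obtain rfl := h
    refine ⟨Sum.inr ⟨j, ℓ'⟩, ?_⟩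
    obtain ⟨bv, hb⟩ := bb'
    interval_cases bv
    · exact Or.inl rfl
    · exact Or.inr (Or.inl rfl)
  · obtain ⟨rfl, h2⟩ := h
    obtain rfl : ℓ = ℓ' := Fin.ext h2
    refine ⟨Sum.inr ⟨j, ℓ⟩, ?_⟩
    obtain ⟨bv, hb⟩ := bb; obtain ⟨bv', hb'⟩ := bb'
    have hbb : bv ≠ bv' := fun hh => hne (by subst hh; rfl)
    interval_cases bv <;> interval_cases bv'
    · omega
    · exact Or.inr (Or.inr rfl)
    · exact Or.inr (Or.inr (Sym2.eq_swap))
    · omega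

lemma edge_class (ht : ∀ j, t j ≤ 1) {e : Sym2 (CWVert m n s t)}
    (he : e ∈ (cwGraph m n s t B).edgeSet) : ∃ c : Idx m n t, edgeP c e := by
  induction e using Sym2.ind with
  | _ a b =>
    rw [SimpleGraph.mem_edgeSet] at he
    rcases he with ⟨hne, h | h⟩
    · exact rel_edgeP ht hne h
    · obtain ⟨c, hc⟩ := rel_edgeP ht hne.symm h
      exact ⟨c, by rwa [Sym2.eq_swap]⟩

lemma matching_upper (hm : 1 ≤ m) (ht : ∀ j, t j ≤ 1) {M : Finset (Sym2 (CWVert m n s t))}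
    (hedge : ∀ e ∈ M, e ∈ (cwGraph m n s t B).edgeSet)
    (hdisj : ∀ e ∈ M, ∀ e' ∈ M, e ≠ e' → ∀ v, v ∈ e → v ∉ e') :
    M.card ≤ m + ∑ j, t j := by
  classical
  have hcl : ∀ e : Sym2 (CWVert m n s t), ∃ c : Idx m n t, e ∈ M → edgeP c e := by
    intro e
    by_cases he : e ∈ M
    · exact (edge_class ht (hedge e he)).imp fun c hc _ => hc
    · exact ⟨Sum.inl ⟨0, hm⟩, fun h => absurd h he⟩
  choose g hg using hcl
  have hinj : Set.InjOn g M := by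
    intro e he e' he' heq
    by_contra hne
    have hd := hdisj e he e' he' hne
    have p := hg e he
    have p' := hg e' he'
    rw [heq] at p
    cases hc : g e' with
    | inl i =>
      rw [hc] at p p'
      simp only [edgeP] at p p'
      exact hd _ p p'
    | inr c =>
      obtain ⟨j, ℓ⟩ := c
      rw [hc] at p p'
      simp only [edgeP] at p p'
      rcases p with rfl | rfl | rfl <;> rcases p' with rfl | rfl | rfl <;>
        first
          | exact hne rfl
          | exact hd _ (Sym2.mem_mk_left _ _) (Sym2.mem_mk_left _ _)
          | exact hd _ (Sym2.mem_mk_left _ _) (Sym2.mem_mk_right _ _)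
          | exact hd _ (Sym2.mem_mk_right _ _) (Sym2.mem_mk_left _ _)
          | exact hd _ (Sym2.mem_mk_right _ _) (Sym2.mem_mk_right _ _)
  calc M.card ≤ (Finset.univ : Finset (Idx m n t)).card :=
        Finset.card_le_card_of_injOn g (fun _ _ => Finset.mem_univ _) hinj
    _ = m + ∑ j, t j := by rw [Finset.card_univ, card_Idx]

end CWProof

/-- If `G` is a Cameron–Walker graph with standard labeling and `tⱼ ≤ 1` for all `j`, then
`i(G) = ∑ tⱼ + m`, i.e. the minimum size of an independent dominating set equals the
matching number of `G`. -/
theorem cwGraph_small_triangles_indepDomNumber (m n : ℕ) (s : Fin m → ℕ) (t : Fin n → ℕ)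
    (B : Fin m → Fin n → Prop) (hm : 1 ≤ m) (hn : 1 ≤ n) (hs : ∀ i, 1 ≤ s i)
    (hconn : (bipGraph m n B).Connected) (ht : ∀ j, t j ≤ 1) :
    indepDomNumber (cwGraph m n s t B) = (∑ j, t j) + m ∧
    matchingNumber (cwGraph m n s t B) = (∑ j, t j) + m := by
  rw [add_comm (∑ j, t j) m]
  constructor
  · obtain ⟨A, hA, hcard⟩ := dom_witness (B := B) (s := s) (t := t) hm hconn
    refine le_antisymm (Nat.sInf_le ⟨A, hA, hcard⟩) ?_
    refine le_csInf ⟨_, A, hA, hcard⟩ ?_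
    rintro k ⟨A', hA', rfl⟩
    exact dom_lower ht hs hA'
  · obtain ⟨M, hM1, hM2, hM3⟩ := matching_witness (B := B) (t := t) hs
    have hub : ∀ k ∈ {k | ∃ M : Finset (Sym2 (CWVert m n s t)),
        (∀ e ∈ M, e ∈ (cwGraph m n s t B).edgeSet) ∧
        (∀ e ∈ M, ∀ e' ∈ M, e ≠ e' → ∀ v, v ∈ e → v ∉ e') ∧ M.card = k},
        k ≤ m + ∑ j, t j := by
      rintro k ⟨M', h1, h2, rfl⟩
      exact matching_upper hm ht h1 h2
    exact le_antisymm (csSup_le ⟨_, M, hM1, hM2, hM3⟩ hub)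
      (le_csSup ⟨_, hub⟩ ⟨M, hM1, hM2, hM3⟩)
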